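/- Let σ > 0, c₁ ≠ 0, γ ≠ 0, δ ≠ 0, and set β = (c₁+1)/c₁ and κ = σ²/(2c₁²). Let W : ℝ → ℝ be twice differentiable with W''(z) + W'(z)² − β·W'(z) ≠ 0 for all z, and define u(S,t) = exp(δt + W(ln S − γt)) for S > 0. Then: (a) u solves the special-model PDE u_t + (1/2)·σ²S²·u_SS·u_S² / (u_S − c₁·S·u_SS)² = 0 if and only if W satisfies δ − γ·W' + κ·(W')²·(W'' + (W')² − W') / (W'' + (W')² − β·W')² = 0 on ℝ; and (b) this holds if and only if Y = W' satisfies the first-order ODE (Y')²·(δ − γY) + Y'·Y·(2(δ − γY)(Y − β) + κY) + Y²·((δ − γY)(Y − β)² + κY(Y − 1)) = 0 on ℝ. (This is the reduction of the special model under the subgroup H₃, with invariants z = ln S − γt, W = ln u − δt.) -/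

import Mathlib

open Real Set
set_option maxHeartbeats 1000000

/-- Partial derivative of `u(S,t)` with respect to `S`. -/
noncomputable def pS (u : ℝ → ℝ → ℝ) (S t : ℝ) : ℝ := deriv (fun s => u s t) S
/-- Second partial derivative of `u(S,t)` with respect to `S`. -/
noncomputable def pSS (u : ℝ → ℝ → ℝ) (S t : ℝ) : ℝ := deriv (fun s => pS u s t) S
/-- Partial derivative of `u(S,t)` with respect to `t`. -/
noncomputable def pt (u : ℝ → ℝ → ℝ) (S t : ℝ) : ℝ := deriv (fun τ => u S τ) t

section aux
variable (γ δ : ℝ) (W : ℝ → ℝ)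

lemma aux_hasDerivAt_S (hW : Differentiable ℝ W) (t S : ℝ) (hS : 0 < S) :
    HasDerivAt (fun s => Real.exp (δ * t + W (Real.log s - γ * t)))
      (Real.exp (δ * t + W (Real.log S - γ * t)) * (deriv W (Real.log S - γ * t) * S⁻¹)) S := by
  have h1 : HasDerivAt (fun s : ℝ => Real.log s - γ * t) S⁻¹ S := by
    simpa using (Real.hasDerivAt_log (ne_of_gt hS)).sub_const (γ * t)
  have h2 : HasDerivAt (fun s => W (Real.log s - γ * t))
      (deriv W (Real.log S - γ * t) * S⁻¹) S :=
    (hW _).hasDerivAt.comp S h1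
  simpa using (h2.const_add (δ * t)).exp

lemma aux_pS (hW : Differentiable ℝ W) (t S : ℝ) (hS : 0 < S) :
    pS (fun S t => Real.exp (δ * t + W (Real.log S - γ * t))) S t
      = Real.exp (δ * t + W (Real.log S - γ * t)) * deriv W (Real.log S - γ * t) / S := by
  have := (aux_hasDerivAt_S γ δ W hW t S hS).deriv
  rw [pS, this]; field_simp

lemma aux_pSS (hW : Differentiable ℝ W) (hW' : Differentiable ℝ (deriv W)) (t S : ℝ) (hS : 0 < S) :
    pSS (fun S t => Real.exp (δ * t + W (Real.log S - γ * t))) S t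
      = Real.exp (δ * t + W (Real.log S - γ * t)) *
          (deriv (deriv W) (Real.log S - γ * t) + (deriv W (Real.log S - γ * t)) ^ 2
            - deriv W (Real.log S - γ * t)) / S ^ 2 := by
  have heq : (fun s => pS (fun S t => Real.exp (δ * t + W (Real.log S - γ * t))) s t)
      =ᶠ[nhds S] fun s =>
        Real.exp (δ * t + W (Real.log s - γ * t)) * deriv W (Real.log s - γ * t) * s⁻¹ := by
    filter_upwards [Ioi_mem_nhds hS] with s hs
    rw [aux_pS γ δ W hW t s hs]; ring
  rw [pSS, heq.deriv_eq]
  have h1 : HasDerivAt (fun s : ℝ => Real.log s - γ * t) S⁻¹ S := by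
    simpa using (Real.hasDerivAt_log (ne_of_gt hS)).sub_const (γ * t)
  have hE := aux_hasDerivAt_S γ δ W hW t S hS
  have hY : HasDerivAt (fun s => deriv W (Real.log s - γ * t))
      (deriv (deriv W) (Real.log S - γ * t) * S⁻¹) S :=
    (hW' _).hasDerivAt.comp S h1
  have hI : HasDerivAt (fun s : ℝ => s⁻¹) (-(S ^ 2)⁻¹) S := hasDerivAt_inv (ne_of_gt hS)
  have := ((hE.mul hY).mul hI).deriv
  simp only [Pi.mul_def] at this
  rw [this]
  have hS' : S ≠ 0 := ne_of_gt hS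
  field_simp
  ring

lemma aux_pt (hW : Differentiable ℝ W) (t S : ℝ) :
    pt (fun S t => Real.exp (δ * t + W (Real.log S - γ * t))) S t
      = Real.exp (δ * t + W (Real.log S - γ * t)) *
          (δ - γ * deriv W (Real.log S - γ * t)) := by
  have h1 : HasDerivAt (fun τ : ℝ => Real.log S - γ * τ) (-γ) t := by
    simpa using ((hasDerivAt_id t).const_mul γ).const_sub (Real.log S)
  have h2 : HasDerivAt (fun τ => W (Real.log S - γ * τ))
      (deriv W (Real.log S - γ * t) * (-γ)) t := (hW _).hasDerivAt.comp t h1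
  have h3 : HasDerivAt (fun τ : ℝ => δ * τ) δ t := by
    simpa using (hasDerivAt_id t).const_mul δ
  have := ((h3.add h2).exp).deriv
  simp only [Pi.add_def] at this
  rw [pt, this]; ring

end aux

/-- pure algebra for part (b) -/
lemma aux_algebra_b (δ γ κ β x y : ℝ) (hD : x + y ^ 2 - β * y ≠ 0) :
    (δ - γ * y + κ * y ^ 2 * (x + y ^ 2 - y) / (x + y ^ 2 - β * y) ^ 2 = 0) ↔
    (x ^ 2 * (δ - γ * y) + x * y * (2 * (δ - γ * y) * (y - β) + κ * y) +
      y ^ 2 * ((δ - γ * y) * (y - β) ^ 2 + κ * y * (y - 1)) = 0) := by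
  have h1 : δ - γ * y + κ * y ^ 2 * (x + y ^ 2 - y) / (x + y ^ 2 - β * y) ^ 2
      = (x ^ 2 * (δ - γ * y) + x * y * (2 * (δ - γ * y) * (y - β) + κ * y) +
          y ^ 2 * ((δ - γ * y) * (y - β) ^ 2 + κ * y * (y - 1))) /
        (x + y ^ 2 - β * y) ^ 2 := by
    rw [eq_div_iff (pow_ne_zero 2 hD), add_mul, div_mul_cancel₀ _ (pow_ne_zero 2 hD)]
    ring
  rw [h1, div_eq_zero_iff]
  simp [pow_ne_zero 2 hD]
/-- pointwise algebra for part (a) -/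
lemma aux_algebra_a (σ c₁ γ δ β κ S E Y A : ℝ) (hc₁ : c₁ ≠ 0)
    (hβ : β = (c₁ + 1) / c₁) (hκ : κ = σ ^ 2 / (2 * c₁ ^ 2))
    (hS : S ≠ 0) (hE : E ≠ 0) (hD : A + Y ^ 2 - β * Y ≠ 0) :
    (E * (δ - γ * Y) +
      (1 / 2) * σ ^ 2 * S ^ 2 * (E * (A + Y ^ 2 - Y) / S ^ 2) * (E * Y / S) ^ 2 /
        (E * Y / S - c₁ * S * (E * (A + Y ^ 2 - Y) / S ^ 2)) ^ 2 = 0) ↔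
    (δ - γ * Y + κ * Y ^ 2 * (A + Y ^ 2 - Y) / (A + Y ^ 2 - β * Y) ^ 2 = 0) := by
  subst hβ hκ
  set D : ℝ := A + Y ^ 2 - (c₁ + 1) / c₁ * Y with hDdef
  have hden2 : E * Y / S - c₁ * S * (E * (A + Y ^ 2 - Y) / S ^ 2)
      = -(c₁ * E * D) / S := by
    rw [hDdef]; field_simp; ring
  have key : E * (δ - γ * Y) +
      (1 / 2) * σ ^ 2 * S ^ 2 * (E * (A + Y ^ 2 - Y) / S ^ 2) * (E * Y / S) ^ 2 /
        (E * Y / S - c₁ * S * (E * (A + Y ^ 2 - Y) / S ^ 2)) ^ 2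
      = E * (δ - γ * Y + σ ^ 2 / (2 * c₁ ^ 2) * Y ^ 2 * (A + Y ^ 2 - Y) / D ^ 2) := by
    rw [hden2]
    field_simp
  rw [key, mul_eq_zero]
  simp [hE]

theorem special_model_reduction_H3
    (σ c₁ γ δ β κ : ℝ) (hσ : 0 < σ) (hc₁ : c₁ ≠ 0) (hγ : γ ≠ 0) (hδ : δ ≠ 0)
    (hβ : β = (c₁ + 1) / c₁) (hκ : κ = σ ^ 2 / (2 * c₁ ^ 2))
    (W : ℝ → ℝ) (hW : Differentiable ℝ W) (hW' : Differentiable ℝ (deriv W))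
    (hden : ∀ z : ℝ,
      deriv (deriv W) z + (deriv W z) ^ 2 - β * deriv W z ≠ 0)
    (u : ℝ → ℝ → ℝ)
    (hu : u = fun S t => Real.exp (δ * t + W (Real.log S - γ * t))) :
    ((∀ S ∈ Set.Ioi (0 : ℝ), ∀ t : ℝ,
      pt u S t + (1 / 2) * σ ^ 2 * S ^ 2 * pSS u S t * (pS u S t) ^ 2 /
        (pS u S t - c₁ * S * pSS u S t) ^ 2 = 0)
    ↔
    (∀ z : ℝ,
      δ - γ * deriv W z +
        κ * (deriv W z) ^ 2 *
          (deriv (deriv W) z + (deriv W z) ^ 2 - deriv W z) /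
          (deriv (deriv W) z + (deriv W z) ^ 2 - β * deriv W z) ^ 2 = 0)) ∧
    ((∀ z : ℝ,
      δ - γ * deriv W z +
        κ * (deriv W z) ^ 2 *
          (deriv (deriv W) z + (deriv W z) ^ 2 - deriv W z) /
          (deriv (deriv W) z + (deriv W z) ^ 2 - β * deriv W z) ^ 2 = 0)
    ↔
    (∀ z : ℝ,
      (deriv (deriv W) z) ^ 2 * (δ - γ * deriv W z) +
        deriv (deriv W) z * deriv W z *
          (2 * (δ - γ * deriv W z) * (deriv W z - β) + κ * deriv W z) +
        (deriv W z) ^ 2 *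
          ((δ - γ * deriv W z) * (deriv W z - β) ^ 2 +
            κ * deriv W z * (deriv W z - 1)) = 0)) := by
  subst hu
  constructor
  · constructor
    · intro h z
      have h0 := h (Real.exp z) (Real.exp_pos z) 0
      rw [aux_pt γ δ W hW 0 (Real.exp z),
        aux_pS γ δ W hW 0 (Real.exp z) (Real.exp_pos z),
        aux_pSS γ δ W hW hW' 0 (Real.exp z) (Real.exp_pos z)] at h0
      have hz : Real.log (Real.exp z) - γ * 0 = z := by simp
      rw [hz] at h0
      exact (aux_algebra_a σ c₁ γ δ β κ (Real.exp z) (Real.exp (δ * 0 + W z))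
        (deriv W z) (deriv (deriv W) z) hc₁ hβ hκ (Real.exp_ne_zero z)
        (Real.exp_ne_zero _) (hden z)).mp h0
    · intro h S hS t
      have hS' : (0 : ℝ) < S := hS
      rw [aux_pt γ δ W hW t S, aux_pS γ δ W hW t S hS',
        aux_pSS γ δ W hW hW' t S hS']
      exact (aux_algebra_a σ c₁ γ δ β κ S (Real.exp (δ * t + W (Real.log S - γ * t)))
        (deriv W (Real.log S - γ * t)) (deriv (deriv W) (Real.log S - γ * t)) hc₁ hβ hκ
        (ne_of_gt hS') (Real.exp_ne_zero _) (hden _)).mpr (h _)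
  · exact forall_congr' fun z => aux_algebra_b δ γ κ β _ _ (hden z)
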